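/- Let f : ℝ → ℝ and β : ℝ → ℝ be continuously differentiable 1-periodic functions (f(t+1) = f(t) and β(τ+1) = β(τ) for all t, τ). Then ∫₀¹ | f'(t) · ∫₀¹ f'(t+τ)·β(τ) dτ | dt ≤ (sup_{t ∈ [0,1]} |f(t)|) · (∫₀¹ |f'(t)| dt) · (∫₀¹ |β'(τ)| dτ). -/

import Mathlib

/-- the smearing estimate from the appendix on fuzzy Neumann
one-forms: for 1-periodic `C¹` functions `f` and `β`,
`∫₀¹ |f'(t)·∫₀¹ f'(t+τ)β(τ) dτ| dt ≤ ‖f‖_∞ · ‖f'‖_{L¹} · ‖β'‖_{L¹}`. -/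
theorem statement13 (f β : ℝ → ℝ) (hf : ContDiff ℝ 1 f) (hβ : ContDiff ℝ 1 β)
    (hfper : ∀ t : ℝ, f (t + 1) = f t) (hβper : ∀ τ : ℝ, β (τ + 1) = β τ) :
    (∫ t in (0:ℝ)..1, |deriv f t * ∫ τ in (0:ℝ)..1, deriv f (t + τ) * β τ|) ≤
      (⨆ t : Set.Icc (0:ℝ) 1, |f t|) * (∫ t in (0:ℝ)..1, |deriv f t|) *
        (∫ τ in (0:ℝ)..1, |deriv β τ|) := by
  have hfd : Differentiable ℝ f := hf.differentiable one_ne_zero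
  have hfc : Continuous f := hfd.continuous
  have hf' : Continuous (deriv f) := hf.continuous_deriv le_rfl
  have hβd : Differentiable ℝ β := hβ.differentiable one_ne_zero
  have hβc : Continuous β := hβd.continuous
  have hβ' : Continuous (deriv β) := hβ.continuous_deriv le_rfl
  set M := ⨆ t : Set.Icc (0:ℝ) 1, |f t| with hMdef
  set A := ∫ t in (0:ℝ)..1, |deriv f t| with hAdef
  set B := ∫ τ in (0:ℝ)..1, |deriv β τ| with hBdef
  have hbdd : BddAbove (Set.range fun t : Set.Icc (0:ℝ) 1 => |f t|) := by
    have hc : IsCompact ((fun t : ℝ => |f t|) '' Set.Icc (0:ℝ) 1) :=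
      isCompact_Icc.image hfc.abs
    have : (Set.range fun t : Set.Icc (0:ℝ) 1 => |f t|)
        = (fun t : ℝ => |f t|) '' Set.Icc (0:ℝ) 1 := by
      rw [show (fun t : Set.Icc (0:ℝ) 1 => |f t|)
          = (fun t : ℝ => |f t|) ∘ Subtype.val from rfl,
        Set.range_comp, Subtype.range_coe]
    rw [this]
    exact hc.bddAbove
  have hper : Function.Periodic f 1 := hfper
  have hMall : ∀ s : ℝ, |f s| ≤ M := by
    intro s
    have h1 : f s = f (Int.fract s) := by
      have := hper.sub_int_mul_eq (x := s) ⌊s⌋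
      rw [mul_one] at this
      exact this.symm
    have h2 : Int.fract s ∈ Set.Icc (0:ℝ) 1 :=
      ⟨Int.fract_nonneg s, (Int.fract_lt_one s).le⟩
    rw [h1]
    exact le_ciSup hbdd (⟨Int.fract s, h2⟩ : Set.Icc (0:ℝ) 1)
  have hM0 : (0:ℝ) ≤ M := (abs_nonneg (f 0)).trans (hMall 0)
  have hB0 : (0:ℝ) ≤ B :=
    intervalIntegral.integral_nonneg zero_le_one fun _ _ => abs_nonneg _
  -- integration by parts
  have ipp : ∀ t : ℝ, (∫ τ in (0:ℝ)..1, deriv f (t + τ) * β τ)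
      = -∫ τ in (0:ℝ)..1, f (t + τ) * deriv β τ := by
    intro t
    have hu : ∀ x ∈ Set.uIcc (0:ℝ) 1,
        HasDerivAt (fun τ => f (t + τ)) (deriv f (t + x)) x := by
      intro x _
      have := (hfd (t + x)).hasDerivAt.comp x ((hasDerivAt_id x).const_add t)
      simp only [mul_one] at this
      exact this
    have hv : ∀ x ∈ Set.uIcc (0:ℝ) 1, HasDerivAt β (deriv β x) x :=
      fun x _ => (hβd x).hasDerivAt
    have h1 : IntervalIntegrable (fun x => deriv f (t + x))
        MeasureTheory.volume 0 1 :=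
      (hf'.comp (continuous_const.add continuous_id)).intervalIntegrable _ _
    have h2 : IntervalIntegrable (deriv β) MeasureTheory.volume 0 1 :=
      hβ'.intervalIntegrable _ _
    have h := intervalIntegral.integral_mul_deriv_eq_deriv_mul hu hv h1 h2
    simp only [add_zero] at h
    rw [hfper t] at h
    have hb : β 1 = β 0 := by simpa using hβper 0
    rw [hb] at h
    linarith
  -- bound on inner integral
  have hIbound : ∀ t : ℝ, |∫ τ in (0:ℝ)..1, deriv f (t + τ) * β τ| ≤ M * B := by
    intro t
    rw [ipp t, abs_neg]
    have step1 : |∫ τ in (0:ℝ)..1, f (t + τ) * deriv β τ|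
        ≤ ∫ τ in (0:ℝ)..1, |f (t + τ) * deriv β τ| :=
      intervalIntegral.abs_integral_le_integral_abs zero_le_one
    have step2 : (∫ τ in (0:ℝ)..1, |f (t + τ) * deriv β τ|)
        ≤ ∫ τ in (0:ℝ)..1, M * |deriv β τ| := by
      apply intervalIntegral.integral_mono_on zero_le_one
      · exact (((hfc.comp (continuous_const.add continuous_id)).mul
          hβ').abs).intervalIntegrable _ _
      · exact (continuous_const.mul hβ'.abs).intervalIntegrable _ _
      · intro τ _
        rw [abs_mul]
        exact mul_le_mul_of_nonneg_right (hMall _) (abs_nonneg _)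
    calc |∫ τ in (0:ℝ)..1, f (t + τ) * deriv β τ|
        ≤ ∫ τ in (0:ℝ)..1, M * |deriv β τ| := step1.trans step2
      _ = M * B := by rw [intervalIntegral.integral_const_mul]
  -- continuity of the inner integral in t
  have hIcont : Continuous fun t : ℝ => ∫ τ in (0:ℝ)..1, deriv f (t + τ) * β τ := by
    apply intervalIntegral.continuous_parametric_intervalIntegral_of_continuous'
      (f := fun t τ => deriv f (t + τ) * β τ)
    exact ((hf'.comp (continuous_fst.add continuous_snd)).mul
      (hβc.comp continuous_snd))
  -- main estimate
  have main : (∫ t in (0:ℝ)..1, |deriv f t * ∫ τ in (0:ℝ)..1, deriv f (t + τ) * β τ|)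
      ≤ ∫ t in (0:ℝ)..1, |deriv f t| * (M * B) := by
    apply intervalIntegral.integral_mono_on zero_le_one
    · exact ((hf'.mul hIcont).abs).intervalIntegrable _ _
    · exact (hf'.abs.mul continuous_const).intervalIntegrable _ _
    · intro t _
      rw [abs_mul]
      exact mul_le_mul_of_nonneg_left (hIbound t) (abs_nonneg _)
  calc (∫ t in (0:ℝ)..1, |deriv f t * ∫ τ in (0:ℝ)..1, deriv f (t + τ) * β τ|)
      ≤ ∫ t in (0:ℝ)..1, |deriv f t| * (M * B) := main
    _ = A * (M * B) := by rw [intervalIntegral.integral_mul_const]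
    _ = M * A * B := by ring
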